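/- If G is a graph with n vertices, m edges, spectral radius μ, and 1 ≤ p ≤ 2, then ‖G‖_{S_p}^p ≤ μ^p + (n-1)^{1-p/2} (2m - μ²)^{p/2}. -/

import Mathlib

open Finset

/-- Singular values (unsorted) of a complex matrix: square roots of eigenvalues of `A * Aᴴ`. -/
noncomputable def svalC {m n : ℕ} (A : Matrix (Fin m) (Fin n) ℂ) : Fin m → ℝ :=
  fun i => Real.sqrt ((Matrix.isHermitian_mul_conjTranspose_self A).eigenvalues i)

/-- Singular values of a complex matrix sorted in decreasing order. -/
noncomputable def svalCSorted {m n : ℕ} (A : Matrix (Fin m) (Fin n) ℂ) : Fin m → ℝ :=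
  svalC A ∘ ⇑(Tuple.sort (fun i => -(svalC A i)))

/-- Singular values (unsorted) of a real matrix. -/
noncomputable def svalR {m n : ℕ} (A : Matrix (Fin m) (Fin n) ℝ) : Fin m → ℝ :=
  fun i => Real.sqrt ((Matrix.isHermitian_mul_conjTranspose_self A).eigenvalues i)

/-- Singular values of a real matrix sorted in decreasing order. -/
noncomputable def svalRSorted {m n : ℕ} (A : Matrix (Fin m) (Fin n) ℝ) : Fin m → ℝ :=
  svalR A ∘ ⇑(Tuple.sort (fun i => -(svalR A i)))

/-- Ky Fan `k`-norm of a complex matrix: the sum of its `k` largest singular values. -/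
noncomputable def kyFanC {m n : ℕ} (A : Matrix (Fin m) (Fin n) ℂ) (k : ℕ) : ℝ :=
  ∑ i : Fin m, if (i : ℕ) < k then svalCSorted A i else 0

/-- Ky Fan `k`-norm of a real matrix. -/
noncomputable def kyFanR {m n : ℕ} (A : Matrix (Fin m) (Fin n) ℝ) (k : ℕ) : ℝ :=
  ∑ i : Fin m, if (i : ℕ) < k then svalRSorted A i else 0

/-- The adjacency matrix of a simple graph is Hermitian (over `ℝ`). -/
lemma adjHerm {n : ℕ} (G : SimpleGraph (Fin n)) [DecidableRel G.Adj] :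
    (G.adjMatrix ℝ).IsHermitian := by
  have h := G.isSymm_adjMatrix (α := ℝ)
  unfold Matrix.IsHermitian
  rw [Matrix.conjTranspose_eq_transpose_of_trivial]
  exact h

/-- Singular values of a graph (unsorted). -/
noncomputable def gsval {n : ℕ} (G : SimpleGraph (Fin n)) [DecidableRel G.Adj] : Fin n → ℝ :=
  svalR (G.adjMatrix ℝ)

/-- Singular values of a graph sorted in decreasing order. -/
noncomputable def gsvalSorted {n : ℕ} (G : SimpleGraph (Fin n)) [DecidableRel G.Adj] : Fin n → ℝ :=
  svalRSorted (G.adjMatrix ℝ)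

/-- Eigenvalues of a graph sorted in decreasing order: `geigSorted G 0 = μ₁ ≥ ⋯ ≥ μₙ`. -/
noncomputable def geigSorted {n : ℕ} (G : SimpleGraph (Fin n)) [DecidableRel G.Adj] : Fin n → ℝ :=
  (adjHerm G).eigenvalues ∘ ⇑(Tuple.sort (fun i => -((adjHerm G).eigenvalues i)))

/-- Ky Fan `k`-norm of a graph. -/
noncomputable def kyFanG {n : ℕ} (G : SimpleGraph (Fin n)) [DecidableRel G.Adj] (k : ℕ) : ℝ :=
  kyFanR (G.adjMatrix ℝ) k

section KMAux

open Matrix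

lemma pm_aux {ι : Type*} (s : Finset ι) (a : ι → ℝ) (ha : ∀ i ∈ s, 0 ≤ a i)
    (q : ℝ) (hq0 : 0 < q) (hq1 : q ≤ 1) :
    ∑ i ∈ s, a i ^ q ≤ (s.card : ℝ) ^ (1 - q) * (∑ i ∈ s, a i) ^ q := by
  rcases s.eq_empty_or_nonempty with rfl | hs
  · simp only [Finset.sum_empty]
    positivity
  · have hN : (0:ℝ) < s.card := by exact_mod_cast Finset.card_pos.2 hs
    have key := Real.arith_mean_le_rpow_mean s (fun _ => (s.card : ℝ)⁻¹)
      (fun i => a i ^ q) (fun i _ => by positivity)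
      (by simp [Finset.sum_const]; field_simp)
      (fun i hi => Real.rpow_nonneg (ha i hi) q) (p := 1/q)
      (by rw [le_div_iff₀ hq0]; simpa using hq1)
    have hz : ∑ i ∈ s, (↑s.card : ℝ)⁻¹ * (a i ^ q) ^ (1/q : ℝ)
        = ∑ i ∈ s, (↑s.card : ℝ)⁻¹ * a i := by
      refine Finset.sum_congr rfl fun i hi => ?_
      rw [← Real.rpow_mul (ha i hi), mul_one_div_cancel hq0.ne', Real.rpow_one]
    rw [hz, one_div_one_div] at key
    rw [← Finset.mul_sum, ← Finset.mul_sum] at key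
    have hS : 0 ≤ ∑ i ∈ s, a i := Finset.sum_nonneg ha
    have key2 : (↑s.card : ℝ)⁻¹ * ∑ i ∈ s, a i ^ q
        ≤ (↑s.card : ℝ)⁻¹ ^ q * (∑ i ∈ s, a i) ^ q := by
      rwa [Real.mul_rpow (by positivity) hS] at key
    have key3 := mul_le_mul_of_nonneg_left key2 (le_of_lt hN)
    rw [← mul_assoc, mul_inv_cancel₀ hN.ne', one_mul, ← mul_assoc] at key3
    refine key3.trans (mul_le_mul_of_nonneg_right (le_of_eq ?_) (Real.rpow_nonneg hS q))
    rw [Real.inv_rpow hN.le, ← Real.rpow_neg hN.le, sub_eq_add_neg, Real.rpow_add hN,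
      Real.rpow_one]

lemma sum_eig_eq_trace {N : ℕ} {M : Matrix (Fin N) (Fin N) ℝ} (hM : M.IsHermitian) :
    ∑ i, hM.eigenvalues i = M.trace := by
  conv_rhs => rw [hM.spectral_theorem, Unitary.conjStarAlgAut_apply]
  rw [Matrix.trace_mul_cycle, Unitary.coe_star_mul_self, Matrix.one_mul, Matrix.trace_diagonal]
  simp

lemma spec_herm {N : ℕ} {M : Matrix (Fin N) (Fin N) ℝ} (hM : M.IsHermitian) :
    spectrum ℝ M = Set.range hM.eigenvalues := by
  conv_lhs => rw [hM.spectral_theorem, Unitary.conjStarAlgAut_apply, Unitary.spectrum_star_right_conjugate,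
    spectrum_diagonal]
  simp [Function.comp]

lemma spec_sq {N : ℕ} {M : Matrix (Fin N) (Fin N) ℝ} (hM : M.IsHermitian) :
    spectrum ℝ (M * M) = Set.range (fun i => hM.eigenvalues i ^ 2) := by
  set U : Matrix (Fin N) (Fin N) ℝ := (hM.eigenvectorUnitary : Matrix (Fin N) (Fin N) ℝ) with hU
  set D : Matrix (Fin N) (Fin N) ℝ := diagonal (RCLike.ofReal ∘ hM.eigenvalues) with hD
  have h1 : M * M = U * (D * D) * star U := by
    conv_lhs => rw [hM.spectral_theorem, Unitary.conjStarAlgAut_apply]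
    rw [← hU, ← hD, show U * D * star U * (U * D * star U)
      = U * D * (star U * U) * (D * star U) by noncomm_ring,
      Unitary.coe_star_mul_self, Matrix.mul_one,
      show U * D * (D * star U) = U * (D * D) * star U by noncomm_ring]
  have h2 : D * D = diagonal (fun i => hM.eigenvalues i ^ 2) := by
    rw [hD, Matrix.diagonal_mul_diagonal]
    refine congrArg diagonal ?_
    ext i
    simp [sq]
  rw [h1, h2, hU]
  have hconj := Unitary.spectrum_star_right_conjugate (R := ℝ)
    (U := hM.eigenvectorUnitary) (a := diagonal (fun i => hM.eigenvalues i ^ 2))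
  rw [hconj, spectrum_diagonal]

lemma rayleigh_le {N : ℕ} {M : Matrix (Fin N) (Fin N) ℝ} (hM : M.IsHermitian)
    {μ : ℝ} (hμ : ∀ i, hM.eigenvalues i ≤ μ) (x : Fin N → ℝ) :
    x ⬝ᵥ (M *ᵥ x) ≤ μ * (x ⬝ᵥ x) := by
  set U : Matrix (Fin N) (Fin N) ℝ := (hM.eigenvectorUnitary : Matrix (Fin N) (Fin N) ℝ) with hU
  have hUT : Uᵀ = star U := by
    ext i j; simp [Matrix.star_apply, Matrix.transpose_apply]
  set y : Fin N → ℝ := (star U) *ᵥ x with hy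
  have hdot : ∀ z : Fin N → ℝ, x ⬝ᵥ (U *ᵥ z) = y ⬝ᵥ z := by
    intro z
    rw [Matrix.dotProduct_mulVec, ← Matrix.mulVec_transpose, hUT, hy]
  have hUy : U *ᵥ y = x := by
    rw [hy, Matrix.mulVec_mulVec, Unitary.mul_star_self_of_mem hM.eigenvectorUnitary.2,
      Matrix.one_mulVec]
  have hxx : x ⬝ᵥ x = y ⬝ᵥ y := by
    calc x ⬝ᵥ x = x ⬝ᵥ (U *ᵥ y) := by rw [hUy]
      _ = y ⬝ᵥ y := hdot y
  have hMx : x ⬝ᵥ (M *ᵥ x) = ∑ i, hM.eigenvalues i * y i ^ 2 := by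
    conv_lhs => rw [hM.spectral_theorem, Unitary.conjStarAlgAut_apply]
    rw [show ((hM.eigenvectorUnitary : Matrix (Fin N) (Fin N) ℝ) *
        diagonal (RCLike.ofReal ∘ hM.eigenvalues) *
        (star (hM.eigenvectorUnitary : Matrix (Fin N) (Fin N) ℝ))) *ᵥ x
        = U *ᵥ (diagonal (RCLike.ofReal ∘ hM.eigenvalues) *ᵥ y) by
      rw [hy, Matrix.mulVec_mulVec, Matrix.mulVec_mulVec, ← hU]]
    rw [hdot]
    simp only [Matrix.mulVec_diagonal, dotProduct]
    refine Finset.sum_congr rfl fun i _ => ?_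
    simp only [Function.comp_apply, RCLike.ofReal_real_eq_id, id_eq]
    ring
  rw [hMx, hxx, dotProduct]
  calc ∑ i, hM.eigenvalues i * y i ^ 2 ≤ ∑ i, μ * y i ^ 2 :=
        Finset.sum_le_sum fun i _ => mul_le_mul_of_nonneg_right (hμ i) (sq_nonneg _)
    _ = μ * ∑ i, y i * y i := by
        rw [← Finset.mul_sum]; exact congrArg (fun t => μ * t) <| Finset.sum_congr rfl fun i _ => by ring

end KMAux

open Matrix


/-- Koolen–Moulton-type bound: `‖G‖_{S_p}^p ≤ μ^p + (n-1)^{1-p/2}(2m - μ²)^{p/2}` for `1 ≤ p ≤ 2`. -/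
theorem schatten_le_koolen_moulton {n m : ℕ} (hn : 0 < n) (G : SimpleGraph (Fin n))
    [DecidableRel G.Adj] (hm : G.edgeFinset.card = m) (μ : ℝ) (hμ : μ = geigSorted G ⟨0, hn⟩)
    (p : ℝ) (hp1 : 1 ≤ p) (hp2 : p ≤ 2) :
    ∑ i, gsval G i ^ p ≤
      μ ^ p + ((n : ℝ) - 1) ^ (1 - p / 2) * (2 * (m : ℝ) - μ ^ 2) ^ (p / 2) := by
  classical
  set A : Matrix (Fin n) (Fin n) ℝ := G.adjMatrix ℝ with hAdef
  have hA : A.IsHermitian := adjHerm G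
  set e : Fin n → ℝ := (adjHerm G).eigenvalues with he
  set σ := Tuple.sort (fun i => -((adjHerm G).eigenvalues i)) with hσ
  have hμ' : μ = e (σ ⟨0, hn⟩) := hμ
  have hmax : ∀ j, e j ≤ μ := by
    intro j
    have h1 := Tuple.monotone_sort (fun i => -((adjHerm G).eigenvalues i))
      (a := ⟨0, hn⟩) (b := σ.symm j) (Fin.mk_le_of_le_val (Nat.zero_le _))
    simp only [Function.comp_apply, ← hσ, Equiv.apply_symm_apply, neg_le_neg_iff] at h1
    rw [hμ']
    exact h1
  have htr : ∑ i, e i = 0 := by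
    rw [he, sum_eig_eq_trace (adjHerm G)]
    show (G.adjMatrix ℝ).trace = 0
    exact SimpleGraph.trace_adjMatrix ℝ G
  have hμ0 : 0 ≤ μ := by
    by_contra h
    push_neg at h
    have hlt : ∑ i, e i < 0 := by
      calc ∑ i, e i ≤ ∑ _i : Fin n, μ := Finset.sum_le_sum fun i _ => hmax i
        _ = n * μ := by rw [Finset.sum_const, Finset.card_univ, Fintype.card_fin]; ring
        _ < 0 := by
          have : (0:ℝ) < n := by exact_mod_cast hn
          nlinarith
    rw [htr] at hlt
    exact lt_irrefl 0 hlt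
  have hneg : ∀ j, -μ ≤ e j := by
    intro j
    set v : Fin n → ℝ := ⇑((adjHerm G).eigenvectorBasis j) with hv
    have hev : A *ᵥ v = e j • v := (adjHerm G).mulVec_eigenvectorBasis j
    have hvv : v ⬝ᵥ v = 1 := by
      have hnorm := (adjHerm G).eigenvectorBasis.orthonormal.1 j
      have hinner : (inner ℝ ((adjHerm G).eigenvectorBasis j) ((adjHerm G).eigenvectorBasis j) : ℝ) = 1 := by
        rw [real_inner_self_eq_norm_sq, hnorm]; norm_num
      rw [PiLp.inner_apply] at hinner
      simpa [dotProduct, RCLike.inner_apply, hv, sq] using hinner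
    have hvAv : v ⬝ᵥ (A *ᵥ v) = e j := by
      rw [hev, dotProduct_smul, smul_eq_mul, hvv, mul_one]
    set w : Fin n → ℝ := fun i => |v i| with hw
    have hww : w ⬝ᵥ w = 1 := by
      rw [← hvv]
      refine Finset.sum_congr rfl fun i _ => ?_
      simp [hw, abs_mul_abs_self]
    have htri : -(v ⬝ᵥ (A *ᵥ v)) ≤ w ⬝ᵥ (A *ᵥ w) := by
      simp only [dotProduct, Matrix.mulVec, dotProduct, Finset.mul_sum,
        ← Finset.sum_neg_distrib]
      refine Finset.sum_le_sum fun i _ => Finset.sum_le_sum fun k _ => ?_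
      have hA0 : 0 ≤ A i k := by
        simp only [hAdef, SimpleGraph.adjMatrix_apply]
        positivity
      have habs : -(v i * (A i k * v k)) ≤ |v i * (A i k * v k)| := neg_le_abs _
      refine habs.trans ?_
      rw [abs_mul, abs_mul, abs_of_nonneg hA0, hw]
    have hray := rayleigh_le (adjHerm G) hmax w
    rw [hww, mul_one] at hray
    have hfin := htri.trans hray
    rw [hvAv] at hfin
    linarith
  set hB := Matrix.isHermitian_mul_conjTranspose_self A with hBdef
  set f : Fin n → ℝ := hB.eigenvalues with hf
  have hf0 : ∀ i, 0 ≤ f i := fun i => Matrix.eigenvalues_self_mul_conjTranspose_nonneg A i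
  have hgs : ∀ i, gsval G i = Real.sqrt (f i) := fun i => rfl
  have hAAH : A * Aᴴ = A * A := by rw [hA.eq]
  have hrange : Set.range f = Set.range (fun i => e i ^ 2) := by
    rw [hf, ← spec_herm hB, hAAH, spec_sq hA]
  have hsum : ∑ i, f i = 2 * (m : ℝ) := by
    rw [hf, sum_eig_eq_trace hB, hAAH]
    have htrAA : (A * A).trace = ∑ i, (G.degree i : ℝ) := by
      rw [Matrix.trace]
      refine Finset.sum_congr rfl fun i _ => ?_
      rw [Matrix.diag_apply, hAdef, SimpleGraph.adjMatrix_mul_apply]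
      rw [SimpleGraph.degree, Finset.card_eq_sum_ones (G.neighborFinset i), Nat.cast_sum]
      refine Finset.sum_congr rfl fun u hu => ?_
      rw [SimpleGraph.mem_neighborFinset] at hu
      simp [SimpleGraph.adjMatrix_apply, hu.symm]
    rw [htrAA, ← Nat.cast_sum, SimpleGraph.sum_degrees_eq_twice_card_edges, hm]
    push_cast
    ring
  have hfle : ∀ i, f i ≤ μ ^ 2 := by
    intro i
    have hmem : f i ∈ Set.range (fun i => e i ^ 2) := by rw [← hrange]; exact ⟨i, rfl⟩
    obtain ⟨j, hj⟩ := hmem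
    rw [← hj]
    exact sq_le_sq' (by linarith [hneg j]) (hmax j)
  obtain ⟨i₀, hi₀⟩ : ∃ i, f i = μ ^ 2 := by
    have hmem : μ ^ 2 ∈ Set.range f := by
      rw [hrange]
      exact ⟨σ ⟨0, hn⟩, by show e (σ ⟨0, hn⟩) ^ 2 = μ ^ 2; rw [← hμ']⟩
    exact hmem
  have hq0 : (0:ℝ) < p / 2 := by linarith
  have hq1 : p / 2 ≤ 1 := by linarith
  have hLHS : ∑ i, gsval G i ^ p = ∑ i, f i ^ (p / 2) := by
    refine Finset.sum_congr rfl fun i _ => ?_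
    rw [hgs i, Real.sqrt_eq_rpow, ← Real.rpow_mul (hf0 i),
      show (1/2:ℝ) * p = p / 2 by ring]
  have hterm1 : f i₀ ^ (p / 2 : ℝ) = μ ^ p := by
    rw [hi₀, ← Real.rpow_natCast μ 2, ← Real.rpow_mul hμ0,
      show ((2:ℕ):ℝ) * (p / 2) = p by push_cast; ring]
  have hcard : ((Finset.univ.erase i₀).card : ℝ) = (n : ℝ) - 1 := by
    rw [Finset.card_erase_of_mem (Finset.mem_univ i₀), Finset.card_univ, Fintype.card_fin]
    have h1n : 1 ≤ n := hn
    push_cast [Nat.cast_sub h1n]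
    ring
  have hesum : ∑ i ∈ Finset.univ.erase i₀, f i = 2 * (m : ℝ) - μ ^ 2 := by
    rw [Finset.sum_erase_eq_sub (Finset.mem_univ i₀), hsum, hi₀]
  have htail : ∑ i ∈ Finset.univ.erase i₀, f i ^ (p / 2 : ℝ)
      ≤ ((n : ℝ) - 1) ^ (1 - p / 2) * (2 * (m : ℝ) - μ ^ 2) ^ (p / 2) := by
    have := pm_aux (Finset.univ.erase i₀) f (fun i _ => hf0 i) (p / 2) hq0 hq1
    rwa [hcard, hesum] at this
  calc ∑ i, gsval G i ^ p = ∑ i, f i ^ (p / 2 : ℝ) := hLHS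
    _ = f i₀ ^ (p / 2 : ℝ) + ∑ i ∈ Finset.univ.erase i₀, f i ^ (p / 2 : ℝ) :=
        (Finset.add_sum_erase _ _ (Finset.mem_univ i₀)).symm
    _ ≤ μ ^ p + ((n : ℝ) - 1) ^ (1 - p / 2) * (2 * (m : ℝ) - μ ^ 2) ^ (p / 2) := by
        rw [hterm1]
        exact add_le_add_right htail _
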